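/- For the mixed median function, the outcome equals a pair (x,y) ∈ Ω²_C at peak vector p if and only if the number of peaks ≤* (x,y) is at least (a+1) − M̲, where M̲ is the number of phantoms ≤* (x,y), and for every element β of Ω ∪ Ω²_C with β <* (x,y) the number of peaks ≤* β is strictly less than (a+1) minus the number of phantoms ≤* β. -/

import Mathlib

/-- The ambient linearly ordered set `Ω ∪ Ω²_C`: singles `x` are encoded as
`toLex (x, x)` and contiguous pairs `(x, y)` as `toLex (x, y)`; the lexicographic
order on `ℝ × ℝ` then restricts to the order `≤*`. -/
abbrev V : Type := Lex (ℝ × ℝ)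

/-- Embedding of a single alternative into `Ω ∪ Ω²_C`. -/
def emb (x : ℝ) : V := toLex (x, x)

/-- A pair of contiguous alternatives as an element of `Ω ∪ Ω²_C`. -/
def pairV (x y : ℝ) : V := toLex (x, y)

/-- `(x, y)` is a pair of contiguous elements of `Ω`, i.e. `(x, y) ∈ Ω²_C`. -/
def IsContigPair (Ω : Finset ℝ) (x y : ℝ) : Prop :=
  x ∈ Ω ∧ y ∈ Ω ∧ x < y ∧ ∀ z ∈ Ω, ¬(x < z ∧ z < y)

/-- `v` belongs to `Ω ∪ Ω²_C`. -/
def InDom (Ω : Finset ℝ) (v : V) : Prop :=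
  (∃ z ∈ Ω, v = emb z) ∨ ∃ x y : ℝ, IsContigPair Ω x y ∧ v = pairV x y

/-- `m` is a median of the list `l` in a linear order. -/
def IsMedian {α : Type*} [LinearOrder α] (l : List α) (m : α) : Prop :=
  m ∈ l ∧ (l.length + 1) / 2 ≤ l.countP (fun b => decide (b ≤ m)) ∧
    (l.length + 1) / 2 ≤ l.countP (fun b => decide (m ≤ b))

lemma countP_ofFn' {α : Type*} {n : ℕ} (f : Fin n → α) (q : α → Bool) :
    (List.ofFn f).countP q = (Finset.univ.filter fun i => q (f i)).card := by
  rw [Finset.card_filter]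
  induction n with
  | zero => simp
  | succ n ih =>
    rw [List.ofFn_succ, List.countP_cons, ih, Fin.sum_univ_succ]
    simp [Nat.add_comm]

/-- Counting characterization of when the mixed median equals a pair
`(x, y) ∈ Ω²_C`: at least `(a+1) − M̲` peaks are `≤* (x,y)`, where `M̲` is the
number of phantoms `≤* (x,y)`, and for every `β ∈ Ω ∪ Ω²_C` with `β <* (x,y)`
the number of peaks `≤* β` is strictly less than `(a+1)` minus the number of
phantoms `≤* β`. -/
theorem stmt11 (Ω : Finset ℝ) (a : ℕ) (γ : Fin (a + 1) → V)
    (hdom : ∀ j, InDom Ω (γ j))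
    (x y : ℝ) (hxy : IsContigPair Ω x y)
    (p : Fin a → ℝ) (hp : ∀ i, p i ∈ Ω) :
    IsMedian ((List.ofFn fun i => emb (p i)) ++ List.ofFn γ) (pairV x y) ↔
      ((a + 1) - (Finset.univ.filter fun j => γ j ≤ pairV x y).card ≤
          (Finset.univ.filter fun i => emb (p i) ≤ pairV x y).card ∧
        ∀ β : V, InDom Ω β → β < pairV x y →
          (Finset.univ.filter fun i => emb (p i) ≤ β).card <
            (a + 1) - (Finset.univ.filter fun j => γ j ≤ β).card) := by
  set m := pairV x y with hm
  set l : List V := (List.ofFn fun i => emb (p i)) ++ List.ofFn γ with hl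
  have hcount : ∀ β : V, l.countP (fun b => decide (b ≤ β)) =
      (Finset.univ.filter fun i => emb (p i) ≤ β).card +
      (Finset.univ.filter fun j => γ j ≤ β).card := by
    intro β
    rw [hl, List.countP_append, countP_ofFn', countP_ofFn']
    simp
  have hMle : ∀ β : V, (Finset.univ.filter fun j => γ j ≤ β).card ≤ a + 1 := by
    intro β
    calc (Finset.univ.filter fun j => γ j ≤ β).card
        ≤ (Finset.univ : Finset (Fin (a+1))).card := Finset.card_filter_le _ _
    _ = a + 1 := by simp
  have hlen : l.length = 2 * a + 1 := by
    simp [hl]; ring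
  have hhalf : (l.length + 1) / 2 = a + 1 := by omega
  have hmemdom : ∀ b ∈ l, InDom Ω b := by
    intro b hb
    rw [hl, List.mem_append] at hb
    rcases hb with hb | hb
    · obtain ⟨i, hi⟩ := List.mem_ofFn.mp hb
      exact Or.inl ⟨p i, hp i, hi.symm⟩
    · obtain ⟨j, hj⟩ := List.mem_ofFn.mp hb
      exact hj ▸ hdom j
  have hsplit : l.countP (fun b => decide (b < m)) + l.countP (fun b => decide (m ≤ b)) = l.length := by
    have h : l.length = _ := (List.length_eq_countP_add_countP (fun b => decide (b < m)))
    have h2 : l.countP (fun b => decide ¬(decide (b < m) = true)) =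
        l.countP (fun b => decide (m ≤ b)) :=
      List.countP_congr (fun b _ => by simp [not_lt])
    omega
  have key : (∀ β : V, InDom Ω β → β < m →
      (Finset.univ.filter fun i => emb (p i) ≤ β).card +
      (Finset.univ.filter fun j => γ j ≤ β).card < a + 1) ↔
      l.countP (fun b => decide (b < m)) ≤ a := by
    constructor
    · intro h
      by_contra hc
      push_neg at hc
      set l' := l.filter (fun b => decide (b < m)) with hl'
      have hlen' : a + 1 ≤ l'.length := by
        rw [hl', ← List.countP_eq_length_filter]; omega
      have hne : l'.toFinset.Nonempty := by
        rcases List.exists_mem_of_length_pos (l := l') (by omega) with ⟨b, hb⟩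
        exact ⟨b, List.mem_toFinset.mpr hb⟩
      set β := l'.toFinset.max' hne with hβ
      have hβl' : β ∈ l' := List.mem_toFinset.mp (l'.toFinset.max'_mem hne)
      have hβl : β ∈ l := List.mem_of_mem_filter hβl'
      have hβm : β < m := by
        have := List.of_mem_filter hβl'
        simpa using this
      have hmax : ∀ b ∈ l', b ≤ β := fun b hb =>
        l'.toFinset.le_max' b (List.mem_toFinset.mpr hb)
      have hmono : l.countP (fun b => decide (b < m)) ≤ l.countP (fun b => decide (b ≤ β)) := by
        apply List.countP_mono_left
        intro b hb hbm
        simp only [decide_eq_true_eq] at hbm ⊢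
        exact hmax b (List.mem_filter.mpr ⟨hb, by simpa⟩)
      have := h β (hmemdom β hβl) hβm
      rw [hcount β] at hmono
      omega
    · intro h β hβdom hβm
      have hmono : l.countP (fun b => decide (b ≤ β)) ≤ l.countP (fun b => decide (b < m)) := by
        apply List.countP_mono_left
        intro b _ hbm
        simp only [decide_eq_true_eq] at hbm ⊢
        exact lt_of_le_of_lt hbm hβm
      rw [hcount β] at hmono
      omega
  constructor
  · rintro ⟨hmem, h1, h2⟩
    rw [hhalf] at h1 h2
    rw [hcount m] at h1
    have hM := hMle m
    constructor
    · omega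
    · intro β hd hb
      have := key.mpr (by omega) β hd hb
      have := hMle β
      omega
  · rintro ⟨h1, h2⟩
    have hM := hMle m
    have h1' : a + 1 ≤ (Finset.univ.filter fun i => emb (p i) ≤ m).card +
        (Finset.univ.filter fun j => γ j ≤ m).card := by omega
    have h2' := key.mp (by intro β hd hb; have := h2 β hd hb; have := hMle β; omega)
    have hmem : m ∈ l := by
      by_contra hmem
      have hmono : l.countP (fun b => decide (b ≤ m)) ≤ l.countP (fun b => decide (b < m)) := by
        apply List.countP_mono_left
        intro b hb hbm
        simp only [decide_eq_true_eq] at hbm ⊢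
        exact lt_of_le_of_ne hbm (fun h => hmem (h ▸ hb))
      rw [hcount m] at hmono
      omega
    refine ⟨hmem, ?_, ?_⟩ <;> rw [hhalf]
    · rw [hcount m]; omega
    · omega
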